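/- Let S be a semigroup satisfying the identity x·y·z·x·y = x·y for all x, y, z ∈ S, and suppose that for all x, y, z ∈ S, x·y·y = x·y or z·z·x = z·x. Then for all x, y, z, u, w ∈ S, x·y·z = x·y·w·z or x·y·z = x·u·y·z. -/
import Mathlib


theorem stmt_2 {S : Type*} [Semigroup S]
    (hGRB : ∀ x y z : S, x * y * z * x * y = x * y)
    (h2 : ∀ x y z : S, x * y * y = x * y ∨ z * z * x = z * x) :
    ∀ x y z u w : S, x * y * z = x * y * w * z ∨ x * y * z = x * u * y * z := by
  have hA : ∀ p q t : S, p * (q * (t * (p * q))) = p * q := by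
    intro p q t
    have h := hGRB p q t
    simp only [mul_assoc] at h
    exact h
  have hAT : ∀ p q t T : S, p * (q * (t * (p * (q * T)))) = p * (q * T) := by
    intro p q t T
    have h := congrArg (fun r => r * T) (hA p q t)
    simp only [mul_assoc] at h
    exact h
  have redL : ∀ s w z : S, s * w * z * z = s * w * z → w * (z * z) = w * z := by
    intro s w z hyp
    simp only [mul_assoc] at hyp
    have h := congrArg (fun r => w * z * r) hyp
    simp only [mul_assoc] at h
    rw [hAT w z s z] at h
    rw [hA w z s] at h
    exact h
  have redR : ∀ x s t : S, x * x * (s * t) = x * (s * t) → x * (x * s) = x * s := by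
    intro x s t hyp
    simp only [mul_assoc] at hyp
    have h := congrArg (fun r => r * (x * s)) hyp
    simp only [mul_assoc] at h
    rw [hA x s t] at h
    exact h
  have fin1 : ∀ x y z w : S, y * (z * z) = y * z → w * (z * z) = w * z →
      x * y * z = x * y * w * z := by
    intro x y z w h1 h2w
    simp only [mul_assoc]
    have hwT : ∀ T : S, w * (z * (z * T)) = w * (z * T) := by
      intro T
      have h := congrArg (fun r => r * T) h2w
      simp only [mul_assoc] at h
      exact h
    have i := hAT x y (w * (z * (z * z))) (z * z)
    simp only [mul_assoc] at i
    have ii := hA z z (x * y)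
    simp only [mul_assoc] at ii
    rw [ii] at i
    calc x * (y * z) = x * (y * (z * z)) := by rw [h1]
      _ = x * (y * (w * (z * (z * z)))) := i.symm
      _ = x * (y * (w * (z * z))) := by rw [hwT z]
      _ = x * (y * (w * z)) := by rw [h2w]
  have fin2 : ∀ x y z u : S, x * (x * y) = x * y → x * (x * u) = x * u →
      x * y * z = x * u * y * z := by
    intro x y z u h1 h2u
    simp only [mul_assoc]
    have h1T : ∀ T : S, x * (x * (y * T)) = x * (y * T) := by
      intro T
      have h := congrArg (fun r => r * T) h1
      simp only [mul_assoc] at h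
      exact h
    have h2T : ∀ T : S, x * (x * (u * T)) = x * (u * T) := by
      intro T
      have h := congrArg (fun r => r * T) h2u
      simp only [mul_assoc] at h
      exact h
    have i := hAT x x (x * (u * (y * z))) (y * z)
    simp only [mul_assoc] at i
    have ii := hA y z (x * x)
    simp only [mul_assoc] at ii
    rw [ii] at i
    calc x * (y * z) = x * (x * (y * z)) := (h1T z).symm
      _ = x * (x * (x * (u * (y * z)))) := i.symm
      _ = x * (u * (y * z)) := by rw [h2T (y * z)]; exact h2T (y * z)
  intro x y z u w
  rcases h2 (y * w) z x with hJ1 | hJ1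
  · have hw := redL y w z hJ1
    rcases h2 (u * y) z x with hJ2 | hJ2
    · have hy := redL u y z hJ2
      exact Or.inl (fin1 x y z w hy hw)
    · have hu := redR x u y hJ2
      rcases h2 y z x with hJ3 | hJ3
      · have hy : y * (z * z) = y * z := by rw [← mul_assoc]; exact hJ3
        exact Or.inl (fin1 x y z w hy hw)
      · have hxy : x * (x * y) = x * y := by rw [← mul_assoc]; exact hJ3
        exact Or.inr (fin2 x y z u hxy hu)
  · have hxy := redR x y w hJ1
    rcases h2 (u * y) z x with hJ2 | hJ2
    · have hy := redL u y z hJ2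
      rcases h2 (u * w) z x with hJ4 | hJ4
      · have hw := redL u w z hJ4
        exact Or.inl (fin1 x y z w hy hw)
      · have hu := redR x u w hJ4
        exact Or.inr (fin2 x y z u hxy hu)
    · have hu := redR x u y hJ2
      exact Or.inr (fin2 x y z u hxy hu)
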